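/- Let d be a strictly positive probability distribution on a finite set Ω and let M be a matrix that is a finite product of T^d-transforms (matrices of the form (1-λ)I + λP^d(i,j)). If p is a probability distribution with full support (all p_i > 0), then the size of the support of Mp is at least the size of the support of p; more generally, for any probability distribution p, |supp(Mp)| ≥ |supp(p)|. -/

import Mathlib

open Matrix BigOperators

/-- The `d`-swap `P^d(i,j)`: the identity except on the pair `{i,j}`, where it has
entries `(i,i) = 1 - d j / d i`, `(i,j) = 1`, `(j,i) = d j / d i`, `(j,j) = 0`. -/
noncomputable def Pswap {n : ℕ} (d : Fin n → ℝ) (i j : Fin n) : Matrix (Fin n) (Fin n) ℝ :=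
  Matrix.of fun k l =>
    if k = i ∧ l = i then 1 - d j / d i
    else if k = i ∧ l = j then 1
    else if k = j ∧ l = i then d j / d i
    else if k = j ∧ l = j then 0
    else if k = l then 1 else 0

lemma Pswap_mulVec {n : ℕ} (d : Fin n → ℝ) (a b : Fin n) (hab : a ≠ b) (q : Fin n → ℝ) :
    (Pswap d a b).mulVec q = fun k =>
      if k = a then (1 - d b / d a) * q a + q b
      else if k = b then (d b / d a) * q a else q k := by
  funext k
  simp only [Matrix.mulVec, dotProduct, Pswap, Matrix.of_apply]
  by_cases hka : k = a
  · rw [if_pos hka]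
    have hzero : ∀ x ∈ (Finset.univ : Finset (Fin n)), x ∉ ({a, b} : Finset (Fin n)) →
        (if k = a ∧ x = a then 1 - d b / d a
          else if k = a ∧ x = b then (1:ℝ)
          else if k = b ∧ x = a then d b / d a
          else if k = b ∧ x = b then 0
          else if k = x then 1 else 0) * q x = 0 := by
      intro x _ hx
      simp only [Finset.mem_insert, Finset.mem_singleton, not_or] at hx
      have hkx : k ≠ x := by rw [hka]; exact fun h => hx.1 h.symm
      simp [hka, hx.1, hx.2, hab, Ne.symm hx.1]
    rw [← Finset.sum_subset (Finset.subset_univ ({a, b} : Finset (Fin n))) hzero,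
      Finset.sum_pair hab]
    simp [hka, hab, Ne.symm hab]
  · by_cases hkb : k = b
    · rw [if_neg hka, if_pos hkb]
      have hzero : ∀ x ∈ (Finset.univ : Finset (Fin n)), x ∉ ({a} : Finset (Fin n)) →
          (if k = a ∧ x = a then 1 - d b / d a
            else if k = a ∧ x = b then (1:ℝ)
            else if k = b ∧ x = a then d b / d a
            else if k = b ∧ x = b then 0
            else if k = x then 1 else 0) * q x = 0 := by
        intro x _ hx
        simp only [Finset.mem_singleton] at hx
        by_cases hxb : x = b
        · simp [hka, hkb, hx, hxb, Ne.symm hab]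
        · have hkx : k ≠ x := by rw [hkb]; exact fun h => hxb h.symm
          simp [hka, hx, hxb, hkx]
      rw [← Finset.sum_subset (Finset.subset_univ ({a} : Finset (Fin n))) hzero,
        Finset.sum_singleton]
      simp [hka, hkb, hab, Ne.symm hab]
    · rw [if_neg hka, if_neg hkb]
      have hzero : ∀ x ∈ (Finset.univ : Finset (Fin n)), x ∉ ({k} : Finset (Fin n)) →
          (if k = a ∧ x = a then 1 - d b / d a
            else if k = a ∧ x = b then (1:ℝ)
            else if k = b ∧ x = a then d b / d a
            else if k = b ∧ x = b then 0
            else if k = x then 1 else 0) * q x = 0 := by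
        intro x _ hx
        simp only [Finset.mem_singleton] at hx
        have hkx : k ≠ x := fun h => hx h.symm
        simp [hka, hkb, hkx]
      rw [← Finset.sum_subset (Finset.subset_univ ({k} : Finset (Fin n))) hzero,
        Finset.sum_singleton]
      simp [hka, hkb]

/-- One T-transform step preserves nonnegativity and does not decrease support size. -/
lemma Tstep {n : ℕ} (d : Fin n → ℝ) (hpos : ∀ i, 0 < d i) (a b : Fin n) (hab : a ≠ b)
    (hle : d b ≤ d a) (lam : ℝ) (hlam : lam ∈ Set.Icc (0:ℝ) 1)
    (q : Fin n → ℝ) (hq : ∀ i, 0 ≤ q i)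
    (T : Matrix (Fin n) (Fin n) ℝ)
    (hT : T = (1 - lam) • (1 : Matrix (Fin n) (Fin n) ℝ) + lam • Pswap d a b) :
    (∀ i, 0 ≤ T.mulVec q i) ∧
      (Finset.univ.filter fun i => 0 < q i).card ≤
        (Finset.univ.filter fun i => 0 < T.mulVec q i).card := by
  obtain ⟨hl0, hl1⟩ := hlam
  set r : ℝ := d b / d a with hr
  have hr0 : 0 < r := div_pos (hpos b) (hpos a)
  have hr1 : r ≤ 1 := (div_le_one (hpos a)).2 hle
  have hTq : T.mulVec q = fun k =>
      if k = a then (1 - lam) * q a + lam * ((1 - r) * q a + q b)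
      else if k = b then (1 - lam) * q b + lam * (r * q a) else q k := by
    rw [hT, Matrix.add_mulVec, Matrix.smul_mulVec, Matrix.smul_mulVec,
      Matrix.one_mulVec, Pswap_mulVec d a b hab q]
    funext k
    by_cases h1 : k = a
    · subst h1; simp [hr, smul_eq_mul]
    · by_cases h2 : k = b
      · subst h2; simp [h1, hr, smul_eq_mul]
      · simp [h1, h2, smul_eq_mul]; ring
  have hTa : T.mulVec q a = (1 - lam) * q a + lam * ((1 - r) * q a + q b) := by
    rw [hTq]; simp
  have hTb : T.mulVec q b = (1 - lam) * q b + lam * (r * q a) := by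
    rw [hTq]; simp [Ne.symm hab]
  have hTk : ∀ k, k ≠ a → k ≠ b → T.mulVec q k = q k := by
    intro k h1 h2; rw [hTq]; simp only []; rw [if_neg h1, if_neg h2]
  have hnn : ∀ i, 0 ≤ T.mulVec q i := by
    intro i
    by_cases h1 : i = a
    · rw [h1, hTa]
      nlinarith [mul_nonneg hl0 (hq b), mul_nonneg (mul_nonneg hl0 (sub_nonneg.2 hr1)) (hq a),
        mul_nonneg (sub_nonneg.2 hl1) (hq a)]
    · by_cases h2 : i = b
      · rw [h2, hTb]
        nlinarith [mul_nonneg hl0 (mul_nonneg hr0.le (hq a)),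
          mul_nonneg (sub_nonneg.2 hl1) (hq b)]
      · rw [hTk i h1 h2]; exact hq i
  refine ⟨hnn, ?_⟩
  have hsumab : T.mulVec q a + T.mulVec q b = q a + q b := by
    rw [hTa, hTb]; ring
  -- case both positive : both images positive
  have hboth : 0 < q a → 0 < q b → 0 < T.mulVec q a ∧ 0 < T.mulVec q b := by
    intro ha hb
    constructor
    · rw [hTa]
      rcases eq_or_lt_of_le hl0 with h | h
      · rw [← h]; simpa using ha
      · nlinarith [mul_nonneg (sub_nonneg.2 hl1) ha.le,
          mul_nonneg (mul_nonneg hl0 (sub_nonneg.2 hr1)) ha.le]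
    · rw [hTb]
      rcases lt_or_eq_of_le hl1 with h | h
      · nlinarith [mul_nonneg hl0 (mul_nonneg hr0.le ha.le)]
      · rw [← h]; simp; positivity
  by_cases hqa : 0 < q a
  · by_cases hqb : 0 < q b
    · refine Finset.card_le_card ?_
      intro k hk
      simp only [Finset.mem_filter, Finset.mem_univ, true_and] at hk ⊢
      by_cases h1 : k = a
      · subst h1; exact (hboth hqa hqb).1
      · by_cases h2 : k = b
        · subst h2; exact (hboth hqa hqb).2
        · rw [hTk k h1 h2]; exact hk
    · -- q b = 0
      have hqb0 : q b = 0 := le_antisymm (not_lt.1 hqb) (hq b)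
      have hsum' : T.mulVec q a + T.mulVec q b = q a := by rw [hsumab, hqb0, add_zero]
      by_cases hTa' : 0 < T.mulVec q a
      · refine Finset.card_le_card ?_
        intro k hk
        simp only [Finset.mem_filter, Finset.mem_univ, true_and] at hk ⊢
        by_cases h1 : k = a
        · subst h1; exact hTa'
        · have h2 : k ≠ b := by rintro rfl; rw [hqb0] at hk; exact lt_irrefl 0 hk
          rw [hTk k h1 h2]; exact hk
      · have hTa0 : T.mulVec q a = 0 := le_antisymm (not_lt.1 hTa') (hnn a)
        have hTb' : 0 < T.mulVec q b := by rw [hTa0, zero_add] at hsum'; rw [hsum']; exact hqa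
        calc (Finset.univ.filter fun i => 0 < q i).card
            = ((Finset.univ.filter fun i => 0 < q i).image (Equiv.swap a b)).card := by
              rw [Finset.card_image_of_injective _ (Equiv.swap a b).injective]
          _ ≤ _ := by
              refine Finset.card_le_card ?_
              rw [Finset.image_subset_iff]
              intro k hk
              simp only [Finset.mem_filter, Finset.mem_univ, true_and] at hk ⊢
              have h2 : k ≠ b := by rintro rfl; rw [hqb0] at hk; exact lt_irrefl 0 hk
              by_cases h1 : k = a
              · subst h1; rw [Equiv.swap_apply_left]; exact hTb'
              · rw [Equiv.swap_apply_of_ne_of_ne h1 h2, hTk k h1 h2]; exact hk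
  · have hqa0 : q a = 0 := le_antisymm (not_lt.1 hqa) (hq a)
    by_cases hqb : 0 < q b
    · have hsum' : T.mulVec q a + T.mulVec q b = q b := by rw [hsumab, hqa0, zero_add]
      by_cases hTb' : 0 < T.mulVec q b
      · refine Finset.card_le_card ?_
        intro k hk
        simp only [Finset.mem_filter, Finset.mem_univ, true_and] at hk ⊢
        by_cases h2 : k = b
        · subst h2; exact hTb'
        · have h1 : k ≠ a := by rintro rfl; rw [hqa0] at hk; exact lt_irrefl 0 hk
          rw [hTk k h1 h2]; exact hk
      · have hTb0 : T.mulVec q b = 0 := le_antisymm (not_lt.1 hTb') (hnn b)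
        have hTa' : 0 < T.mulVec q a := by rw [hTb0, add_zero] at hsum'; rw [hsum']; exact hqb
        calc (Finset.univ.filter fun i => 0 < q i).card
            = ((Finset.univ.filter fun i => 0 < q i).image (Equiv.swap a b)).card := by
              rw [Finset.card_image_of_injective _ (Equiv.swap a b).injective]
          _ ≤ _ := by
              refine Finset.card_le_card ?_
              rw [Finset.image_subset_iff]
              intro k hk
              simp only [Finset.mem_filter, Finset.mem_univ, true_and] at hk ⊢
              have h1 : k ≠ a := by rintro rfl; rw [hqa0] at hk; exact lt_irrefl 0 hk
              by_cases h2 : k = b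
              · subst h2; rw [Equiv.swap_apply_right]; exact hTa'
              · rw [Equiv.swap_apply_of_ne_of_ne h1 h2, hTk k h1 h2]; exact hk
    · have hqb0 : q b = 0 := le_antisymm (not_lt.1 hqb) (hq b)
      refine Finset.card_le_card ?_
      intro k hk
      simp only [Finset.mem_filter, Finset.mem_univ, true_and] at hk ⊢
      have h1 : k ≠ a := by rintro rfl; rw [hqa0] at hk; exact lt_irrefl 0 hk
      have h2 : k ≠ b := by rintro rfl; rw [hqb0] at hk; exact lt_irrefl 0 hk
      rw [hTk k h1 h2]; exact hk

lemma list_step {n : ℕ} (d : Fin n → ℝ) (hpos : ∀ i, 0 < d i)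
    (L : List (Matrix (Fin n) (Fin n) ℝ))
    (hL : ∀ T ∈ L, ∃ (a b : Fin n) (lam : ℝ), a ≠ b ∧ d b ≤ d a ∧
      lam ∈ Set.Icc (0:ℝ) 1 ∧
      T = (1 - lam) • (1 : Matrix (Fin n) (Fin n) ℝ) + lam • Pswap d a b)
    (q : Fin n → ℝ) (hq : ∀ i, 0 ≤ q i) :
    (∀ i, 0 ≤ L.prod.mulVec q i) ∧
      (Finset.univ.filter fun i => 0 < q i).card ≤
        (Finset.univ.filter fun i => 0 < L.prod.mulVec q i).card := by
  induction L with
  | nil => simp [Matrix.one_mulVec]; exact hq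
  | cons T L ih =>
    obtain ⟨ih1, ih2⟩ := ih (fun T hT => hL T (List.mem_cons_of_mem _ hT))
    obtain ⟨a, b, lam, hab, hle, hlam, hTeq⟩ := hL T List.mem_cons_self
    have hrw : (T :: L).prod.mulVec q = T.mulVec (L.prod.mulVec q) := by
      rw [List.prod_cons, ← Matrix.mulVec_mulVec]
    obtain ⟨s1, s2⟩ := Tstep d hpos a b hab hle lam hlam (L.prod.mulVec q) ih1 T hTeq
    rw [hrw]
    exact ⟨s1, le_trans ih2 s2⟩

/-- monotonicity of support size under finite products of
`T^d`-transforms (for a general strictly positive probability distribution `d`,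
the `d`-swaps are taken on pairs `a ≠ b` with `d b ≤ d a`): for every probability
distribution `p`, `|supp(M p)| ≥ |supp(p)|`. -/
theorem stmt10 {n : ℕ} (d : Fin n → ℝ) (hpos : ∀ i, 0 < d i) (hsum : ∑ i, d i = 1)
    (M : Matrix (Fin n) (Fin n) ℝ)
    (hM : ∃ L : List (Matrix (Fin n) (Fin n) ℝ),
        (∀ T ∈ L, ∃ (a b : Fin n) (lam : ℝ), a ≠ b ∧ d b ≤ d a ∧
          lam ∈ Set.Icc (0 : ℝ) 1 ∧
          T = (1 - lam) • (1 : Matrix (Fin n) (Fin n) ℝ) + lam • Pswap d a b) ∧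
        M = L.prod)
    (p : Fin n → ℝ) (hp0 : ∀ i, 0 ≤ p i) (hp1 : ∑ i, p i = 1) :
    (Finset.univ.filter fun i => 0 < p i).card ≤
      (Finset.univ.filter fun i => 0 < M.mulVec p i).card := by
  obtain ⟨L, hL, rfl⟩ := hM
  exact (list_step d hpos L hL p hp0).2
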